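/- The spectral bound of L⁰, the uniform growth bound of the semigroup e^{L⁰t}, and the essential growth bound of e^{L⁰t} all vanish: s(L⁰) = γ(e^{L⁰t}) = γ̃_ess(e^{L⁰t}) = 0; in particular the essential spectral radius satisfies r̃_ess(e^{L⁰t}) = 1 for every t > 0. -/

import Mathlib

noncomputable section

namespace NSRot

open scoped Topology
open MeasureTheory

variable {H : Type*} [NormedAddCommGroup H] [InnerProductSpace ℂ H] [CompleteSpace H]

/-- The action of `L - λ` as a linear map on the domain of the (generally unbounded,
densely defined) operator `L`. -/
def shifted (L : H →ₗ.[ℂ] H) (lam : ℂ) : L.domain →ₗ[ℂ] H :=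
  L.toFun - lam • L.domain.subtype

/-- The resolvent set of an unbounded operator: those `λ` for which `L - λ` has a bounded
everywhere-defined inverse. -/
def resolventSet (L : H →ₗ.[ℂ] H) : Set ℂ :=
  {lam | ∃ R : H →L[ℂ] H, (∀ y : H, R y ∈ L.domain) ∧
    (∀ (y : H) (hy : R y ∈ L.domain), L ⟨R y, hy⟩ - lam • R y = y) ∧
    (∀ x : L.domain, R (L x - lam • (x : H)) = x)}

/-- The spectrum of an unbounded operator. -/
def pSpec (L : H →ₗ.[ℂ] H) : Set ℂ := (resolventSet L)ᶜ

/-- `lam` is an eigenvalue of the unbounded operator `L`. -/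
def IsEigenvalue (L : H →ₗ.[ℂ] H) (lam : ℂ) : Prop :=
  ∃ x : L.domain, (x : H) ≠ 0 ∧ L x = lam • (x : H)

/-- The generalized eigenspaces (kernels of the powers of `L - λ`). -/
def genEigSpace (L : H →ₗ.[ℂ] H) (lam : ℂ) : ℕ → Set H
  | 0 => {0}
  | (n + 1) => {x | ∃ hx : x ∈ L.domain, L ⟨x, hx⟩ - lam • x ∈ genEigSpace L lam n}

/-- `lam` has finite algebraic multiplicity as an eigenvalue of `L`: all generalized
eigenspaces are contained in a single finite-dimensional subspace. -/
def FiniteAlgMult (L : H →ₗ.[ℂ] H) (lam : ℂ) : Prop :=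
  ∃ V : Submodule ℂ H, FiniteDimensional ℂ V ∧ ∀ n, genEigSpace L lam n ⊆ (V : Set H)

/-- The spectral bound `s(L) = sup {Re λ : λ ∈ Sp(L)}`. -/
def spectralBound (L : H →ₗ.[ℂ] H) : ℝ := sSup (Complex.re '' pSpec L)

/-- `T` is a `C₀`-semigroup of bounded operators. -/
def IsC0Semigroup (T : ℝ → H →L[ℂ] H) : Prop :=
  T 0 = 1 ∧ (∀ s t : ℝ, 0 ≤ s → 0 ≤ t → T (s + t) = (T s).comp (T t)) ∧
    ∀ y : H, ContinuousOn (fun t => T t y) (Set.Ici 0)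

/-- The unbounded operator `L` is the infinitesimal generator of the semigroup `T`. -/
def IsGenerator (T : ℝ → H →L[ℂ] H) (L : H →ₗ.[ℂ] H) : Prop :=
  (∀ y : H, y ∈ L.domain ↔ ∃ d : H, HasDerivWithinAt (fun t => T t y) d (Set.Ici 0) 0) ∧
    ∀ x : L.domain, HasDerivWithinAt (fun t => T t (x : H)) (L x) (Set.Ici 0) 0

/-- The uniform growth bound
`γ(T) = inf {μ : ∃ M > 0, ∀ t > 0, ∀ x, ‖T(t)x‖ ≤ M e^{μt} ‖x‖}`. -/
def growthBound (T : ℝ → H →L[ℂ] H) : ℝ :=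
  sInf {μ : ℝ | ∃ M : ℝ, 0 < M ∧ ∀ t : ℝ, 0 < t → ∀ x : H, ‖T t x‖ ≤ M * Real.exp (μ * t) * ‖x‖}

/-- `L - λ` is semi-Fredholm: closed range and finite nullity or finite deficiency. -/
def SemiFredholmAt (L : H →ₗ.[ℂ] H) (lam : ℂ) : Prop :=
  IsClosed ((LinearMap.range (shifted L lam) : Submodule ℂ H) : Set H) ∧
    (FiniteDimensional ℂ (LinearMap.ker (shifted L lam)) ∨
      FiniteDimensional ℂ (H ⧸ LinearMap.range (shifted L lam)))

/-- `L - λ` is Fredholm: closed range and finite nullity and finite deficiency. -/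
def FredholmAt (L : H →ₗ.[ℂ] H) (lam : ℂ) : Prop :=
  IsClosed ((LinearMap.range (shifted L lam) : Submodule ℂ H) : Set H) ∧
    FiniteDimensional ℂ (LinearMap.ker (shifted L lam)) ∧
    FiniteDimensional ℂ (H ⧸ LinearMap.range (shifted L lam))

/-- The essential spectrum (à la Kato): the set of `λ` where `L - λ` is not semi-Fredholm. -/
def essSpec (L : H →ₗ.[ℂ] H) : Set ℂ := {lam | ¬ SemiFredholmAt L lam}

/-- The essential spectrum defined via failure of Fredholmness. -/
def essSpecEN (L : H →ₗ.[ℂ] H) : Set ℂ := {lam | ¬ FredholmAt L lam}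

/-- The essential spectrum of a bounded operator, defined via failure of Fredholmness. -/
def essSpecB (T : H →L[ℂ] H) : Set ℂ :=
  {lam | ¬ (IsClosed ((LinearMap.range ((T - lam • (1 : H →L[ℂ] H)) : H →ₗ[ℂ] H) : Submodule ℂ H) : Set H) ∧
    FiniteDimensional ℂ (LinearMap.ker ((T - lam • (1 : H →L[ℂ] H)) : H →ₗ[ℂ] H)) ∧
    FiniteDimensional ℂ (H ⧸ LinearMap.range ((T - lam • (1 : H →L[ℂ] H)) : H →ₗ[ℂ] H)))}

/-- The essential spectral radius of a bounded operator. -/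
def essRadius (T : H →L[ℂ] H) : ℝ := sSup ((fun z : ℂ => ‖z‖) '' essSpecB T)



section Helpers

open Set MeasureTheory intervalIntegral

variable {T : ℝ → H →L[ℂ] H} {L : H →ₗ.[ℂ] H}

lemma findim_of_subsingleton (M : Type*) [AddCommGroup M] [Module ℂ M] [Subsingleton M] :
    FiniteDimensional ℂ M :=
  Module.finite_def.mpr (by
    have : (⊤ : Submodule ℂ M) = ⊥ := Subsingleton.elim _ _
    rw [this]; exact Submodule.fg_bot)

/-- A submodule containing a closed finite-codimensional submodule is closed. -/
lemma isClosed_of_le_finiteCodim (M N : Submodule ℂ H) (hMN : M ≤ N)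
    (hM : IsClosed (M : Set H)) (hfc : FiniteDimensional ℂ (H ⧸ M)) :
    IsClosed (N : Set H) := by
  haveI : CompleteSpace M := hM.completeSpace_coe
  haveI := hfc
  set P : H →L[ℂ] H := Mᗮ.subtypeL.comp (Submodule.orthogonalProjectionOnto Mᗮ) with hP
  have hPM : ∀ m ∈ M, P m = 0 := by
    intro m hm
    have : (Submodule.orthogonalProjectionOnto Mᗮ) m = 0 :=
      Submodule.orthogonalProjectionOnto_apply_of_mem_orthogonal
        (Submodule.le_orthogonal_orthogonal M hm)
    simp [hP, this]
  have hsplit : ∀ x : H, x - P x ∈ M := by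
    intro x
    have h := Submodule.starProjection_add_starProjection_orthogonal (K := M) x
    have hPx : P x = ((Submodule.orthogonalProjectionOnto Mᗮ) x : H) := by simp [hP]
    have : x - P x = (Submodule.orthogonalProjectionOnto M x : H) := by
      rw [hPx, sub_eq_iff_eq_add]; exact h.symm
    rw [this]; exact (Submodule.orthogonalProjectionOnto M x).2
  have hker : M ≤ LinearMap.ker (P : H →ₗ[ℂ] H) := by
    intro m hm; simpa using hPM m hm
  set Pbar : (H ⧸ M) →ₗ[ℂ] H := M.liftQ (P : H →ₗ[ℂ] H) hker with hPbar
  set V : Submodule ℂ H := N.map (P : H →ₗ[ℂ] H) with hV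
  have hVeq : V = (N.map M.mkQ).map Pbar := by
    have hcomp : Pbar.comp M.mkQ = (P : H →ₗ[ℂ] H) := M.liftQ_mkQ _ _
    rw [hV, ← hcomp, Submodule.map_comp]
  haveI : FiniteDimensional ℂ (N.map M.mkQ) := inferInstance
  haveI : FiniteDimensional ℂ V := by rw [hVeq]; infer_instance
  have hVclosed : IsClosed (V : Set H) := V.closed_of_finiteDimensional
  have hNset : (N : Set H) = P ⁻¹' (V : Set H) := by
    ext x
    constructor
    · intro hx; exact ⟨x, hx, rfl⟩
    · rintro ⟨n, hn, hPn⟩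
      have hPn' : P n = P x := hPn
      have h1 : x - P x ∈ M := hsplit x
      have h2 : n - P n ∈ M := hsplit n
      have : x = (x - P x) - (n - P n) + n := by rw [← hPn']; abel
      rw [this]
      exact N.add_mem (hMN (M.sub_mem h1 h2)) hn
  rw [hNset]
  exact hVclosed.preimage P.continuous

lemma rightDeriv_unique {f : ℝ → H} {a b : H}
    (h1 : HasDerivWithinAt f a (Set.Ici 0) 0) (h2 : HasDerivWithinAt f b (Set.Ici 0) 0) :
    a = b :=
  ((uniqueDiffOn_Ici (0:ℝ)) 0 Set.self_mem_Ici).eq_deriv _ h1 h2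

lemma cexp_deriv (lam : ℂ) (s : ℝ) :
    HasDerivAt (fun u : ℝ => Complex.exp (lam * u)) (lam * Complex.exp (lam * s)) s := by
  have h1 : HasDerivAt (fun u : ℝ => lam * (u : ℂ)) lam s := by
    simpa using (Complex.ofRealCLM.hasDerivAt (x := s)).const_mul lam
  simpa [mul_comm] using h1.cexp

lemma semigroup_right_deriv (hT : IsC0Semigroup T) (hgen : IsGenerator T L)
    (v : L.domain) {s₀ : ℝ} (hs₀ : 0 ≤ s₀) :
    HasDerivWithinAt (fun s => T s (v : H)) (T s₀ (L v)) (Set.Ici s₀) s₀ := by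
  have base : HasDerivWithinAt (fun u => T u (v : H)) (L v) (Set.Ici 0) 0 := hgen.2 v
  have hh : HasDerivWithinAt (fun s : ℝ => s - s₀) 1 (Set.Ici s₀) s₀ :=
    ((hasDerivAt_id s₀).sub_const s₀).hasDerivWithinAt
  have hmaps : Set.MapsTo (fun s : ℝ => s - s₀) (Set.Ici s₀) (Set.Ici 0) := by
    intro s hs; simp only [Set.mem_Ici] at *; linarith
  have hshift : HasDerivWithinAt (fun s : ℝ => T (s - s₀) (v : H)) (L v) (Set.Ici s₀) s₀ := by
    have h2 : HasDerivWithinAt ((fun u => T u (v : H)) ∘ (fun s : ℝ => s - s₀))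
        ((1:ℝ) • (L v : H)) (Set.Ici s₀) s₀ := base.scomp_of_eq s₀ hh hmaps (sub_self s₀).symm
    simpa [Function.comp_def] using h2
  have happ : HasDerivWithinAt (fun s : ℝ => T s₀ (T (s - s₀) (v : H))) (T s₀ (L v))
      (Set.Ici s₀) s₀ := by
    have := ((T s₀).restrictScalars ℝ).hasFDerivAt.comp_hasDerivWithinAt s₀ hshift
    simpa [Function.comp_def] using this
  refine happ.congr (fun s hs => ?_) ?_
  · have h2 : (0:ℝ) ≤ s - s₀ := by simp only [Set.mem_Ici] at hs; linarith
    have h1 := hT.2.1 s₀ (s - s₀) hs₀ h2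
    have h3 : s₀ + (s - s₀) = s := by ring
    rw [h3] at h1
    rw [h1]; rfl
  · show T s₀ (v : H) = T s₀ (T (s₀ - s₀) (v : H))
    rw [sub_self, hT.1]; rfl

lemma contOn_Tsmul (hT : IsC0Semigroup T) (lam : ℂ) (c : ℝ) (w : H) :
    ContinuousOn (fun s : ℝ => Complex.exp (lam * (c - s)) • T s w) (Set.Ici 0) := by
  have hsc : Continuous fun s : ℝ => Complex.exp (lam * (c - s)) := by
    apply Complex.continuous_exp.comp; fun_prop
  exact hsc.continuousOn.smul (hT.2.2 w)

lemma intable_aux (hT : IsC0Semigroup T) (lam : ℂ) (c : ℝ) (w : H)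
    {a b : ℝ} (ha : 0 ≤ a) (hb : 0 ≤ b) :
    IntervalIntegrable (fun s : ℝ => Complex.exp (lam * (c - s)) • T s w) volume a b := by
  apply ContinuousOn.intervalIntegrable
  apply (contOn_Tsmul hT lam c w).mono
  intro u hu
  rw [Set.uIcc] at hu
  exact le_trans (le_inf ha hb) hu.1

/-- Fundamental identity for the semigroup. -/
lemma fund_id (hT : IsC0Semigroup T) (hgen : IsGenerator T L) (x : L.domain) (lam : ℂ)
    {t : ℝ} (ht : 0 ≤ t) :
    Complex.exp (-(lam * t)) • T t (x : H)
      - ∫ s in (0:ℝ)..t, Complex.exp (-(lam * s)) • T s (L x - lam • (x : H)) = (x : H) := by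
  set w : H := L x - lam • (x : H) with hw
  set g : ℝ → H := fun s => Complex.exp (-(lam * s)) • T s w with hg
  have hsc : Continuous fun s : ℝ => Complex.exp (-(lam * s)) := by
    apply Complex.continuous_exp.comp; fun_prop
  have hgcont : ContinuousOn g (Set.Ici 0) := hsc.continuousOn.smul (hT.2.2 w)
  have hIint : ∀ {a b : ℝ}, 0 ≤ a → 0 ≤ b → IntervalIntegrable g volume a b := by
    intro a b ha hb
    apply ContinuousOn.intervalIntegrable
    apply hgcont.mono
    intro u hu
    rw [Set.uIcc] at hu
    exact le_trans (le_inf ha hb) hu.1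
  set φ : ℝ → H := fun s => Complex.exp (-(lam * s)) • T s (x : H) - ∫ u in (0:ℝ)..s, g u
    with hφ
  have hφcont : ContinuousOn φ (Set.Icc 0 t) := by
    apply ContinuousOn.sub
    · exact hsc.continuousOn.smul ((hT.2.2 x).mono Set.Icc_subset_Ici_self)
    · have hint : IntegrableOn g (Set.uIcc 0 t) volume :=
        (hgcont.mono (by rw [Set.uIcc_of_le ht]; exact Set.Icc_subset_Ici_self)).integrableOn_compact
          isCompact_uIcc
      have := intervalIntegral.continuousOn_primitive_interval hint
      rwa [Set.uIcc_of_le ht] at this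
  have hφderiv : ∀ s ∈ Set.Ico 0 t, HasDerivWithinAt φ 0 (Set.Ici s) s := by
    intro s hs
    have hs0 : 0 ≤ s := hs.1
    have d1 : HasDerivWithinAt (fun u => T u (x : H)) (T s (L x)) (Set.Ici s) s :=
      semigroup_right_deriv hT hgen x hs0
    have d2 : HasDerivWithinAt (fun u : ℝ => Complex.exp (-(lam * u)))
        (-lam * Complex.exp (-(lam * s))) (Set.Ici s) s := by
      have := (cexp_deriv (-lam) s).hasDerivWithinAt (s := Set.Ici s)
      simpa [neg_mul] using this
    have d12 := d2.smul d1
    have d3 : HasDerivWithinAt (fun u => ∫ r in (0:ℝ)..u, g r) (g s) (Set.Ici s) s := by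
      apply intervalIntegral.integral_hasDerivWithinAt_right (hIint le_rfl hs0)
        (t := Set.Ioi s)
      · exact ⟨Set.Ici 0, Filter.mem_of_superset self_mem_nhdsWithin
          (fun u hu => le_trans hs0 (le_of_lt hu)), hgcont.aestronglyMeasurable measurableSet_Ici⟩
      · exact (hgcont s hs0).mono (fun u hu => le_trans hs0 (le_of_lt hu))
    have dtot := d12.sub d3
    have hzero : Complex.exp (-(lam * s)) • T s (L x)
        + (-lam * Complex.exp (-(lam * s))) • T s (x : H) - g s = 0 := by
      have hTsw : T s w = T s (L x) - lam • T s (x : H) := by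
        rw [hw, (T s).map_sub, (T s).map_smul]
      rw [hg]; simp only [hTsw]
      module
    rw [hzero] at dtot
    exact dtot
  have := constant_of_has_deriv_right_zero hφcont hφderiv t (Set.right_mem_Icc.mpr ht)
  have hφ0 : φ 0 = (x : H) := by
    simp [hφ, hT.1, intervalIntegral.integral_same]
  rw [hφ0] at this
  exact this

/-- The smoothing operator `B_λ(t)` maps into the domain, with `(L-λ)B_λ(t)y = T(t)y - e^{λt}y`. -/
lemma B_lemma (hT : IsC0Semigroup T) (hgen : IsGenerator T L) {t : ℝ} (ht : 0 ≤ t)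
    (lam : ℂ) (y : H) :
    ∃ hx : (∫ s in (0:ℝ)..t, Complex.exp (lam * (t - s)) • T s y) ∈ L.domain,
      L ⟨_, hx⟩ - lam • (∫ s in (0:ℝ)..t, Complex.exp (lam * (t - s)) • T s y)
        = T t y - Complex.exp (lam * t) • y := by
  set f : ℝ → H := fun σ => Complex.exp (lam * (t - σ)) • T σ y with hf
  have fcont : ContinuousOn f (Set.Ici 0) := contOn_Tsmul hT lam t y
  have fint : ∀ {a b : ℝ}, 0 ≤ a → 0 ≤ b → IntervalIntegrable f volume a b :=
    fun ha hb => intable_aux hT lam t y ha hb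
  set By : H := ∫ s in (0:ℝ)..t, f s with hBy
  have step1 : ∀ h : ℝ, 0 ≤ h → T h By
      = Complex.exp (lam * h) • (By + (∫ σ in t..t+h, f σ) - ∫ σ in (0:ℝ)..h, f σ) := by
    intro h hh
    have e1 : T h By = ∫ s in (0:ℝ)..t, T h (f s) :=
      ((T h).intervalIntegral_comp_comm (fint le_rfl ht)).symm
    set G : ℝ → H := fun σ => Complex.exp (lam * (t - σ + h)) • T σ y with hG
    have e2 : ∫ s in (0:ℝ)..t, T h (f s) = ∫ s in (0:ℝ)..t, G (s + h) := by
      apply intervalIntegral.integral_congr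
      intro s hs
      have hs0 : 0 ≤ s := by rw [Set.uIcc_of_le ht] at hs; exact hs.1
      have hsg := hT.2.1 h s hh hs0
      simp only [hf, hG]
      rw [(T h).map_smul]
      congr 1
      · congr 1; push_cast; ring
      · rw [add_comm s h, hsg]; rfl
    have e3 : ∫ s in (0:ℝ)..t, G (s + h) = ∫ σ in (0+h)..(t+h), G σ :=
      intervalIntegral.integral_comp_add_right G h
    have e4 : ∀ σ, G σ = Complex.exp (lam * h) • f σ := by
      intro σ
      simp only [hG, hf]
      have harg : lam * (↑t - ↑σ + ↑h) = lam * ↑h + lam * (↑t - ↑σ) := by ring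
      rw [smul_smul, ← Complex.exp_add, harg]
    have e5 : ∫ σ in (0+h)..(t+h), G σ
        = Complex.exp (lam * h) • ∫ σ in h..(t+h), f σ := by
      rw [zero_add]
      simp_rw [e4]
      exact intervalIntegral.integral_smul _ _
    have hth : (0:ℝ) ≤ t + h := by linarith
    have c1 := intervalIntegral.integral_add_adjacent_intervals
      (fint le_rfl hh) (fint hh hth)
    have c2 := intervalIntegral.integral_add_adjacent_intervals
      (fint le_rfl ht) (fint ht hth)
    have key : (∫ σ in h..(t+h), f σ)
        = By + (∫ σ in t..t+h, f σ) - ∫ σ in (0:ℝ)..h, f σ := by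
      have e6 : (∫ σ in h..(t+h), f σ) = (∫ σ in (0:ℝ)..(t+h), f σ) - ∫ σ in (0:ℝ)..h, f σ := by
        rw [← c1]; abel
      rw [e6, ← c2, hBy]
    rw [e1, e2, e3, e5, key]
  -- derivative of the right-hand side at 0⁺
  have measAt : ∀ {u : ℝ}, 0 ≤ u → StronglyMeasurableAtFilter f (nhdsWithin u (Set.Ioi u)) volume := by
    intro u hu
    exact ⟨Set.Ici 0, Filter.mem_of_superset self_mem_nhdsWithin
      (fun r hr => le_trans hu (le_of_lt hr)), fcont.aestronglyMeasurable measurableSet_Ici⟩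
  have dA : HasDerivWithinAt (fun h : ℝ => ∫ σ in t..t+h, f σ) (f t) (Set.Ici 0) 0 := by
    have outer : HasDerivWithinAt (fun u : ℝ => ∫ σ in t..u, f σ) (f t) (Set.Ici t) t := by
      apply intervalIntegral.integral_hasDerivWithinAt_right (fint ht ht) (t := Set.Ioi t)
      · exact measAt ht
      · exact (fcont t ht).mono (fun r hr => le_trans ht (le_of_lt hr))
    have inner : HasDerivWithinAt (fun h : ℝ => t + h) 1 (Set.Ici 0) 0 :=
      ((hasDerivAt_id (0:ℝ)).const_add t).hasDerivWithinAt
    have hmaps : Set.MapsTo (fun h : ℝ => t + h) (Set.Ici 0) (Set.Ici t) := by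
      intro r hr; simp only [Set.mem_Ici] at *; linarith
    have h2 : HasDerivWithinAt ((fun u : ℝ => ∫ σ in t..u, f σ) ∘ (fun h : ℝ => t + h))
        ((1:ℝ) • f t) (Set.Ici 0) 0 := outer.scomp_of_eq 0 inner hmaps (add_zero t).symm
    simpa [Function.comp_def] using h2
  have dB : HasDerivWithinAt (fun h : ℝ => ∫ σ in (0:ℝ)..h, f σ) (f 0) (Set.Ici 0) 0 := by
    apply intervalIntegral.integral_hasDerivWithinAt_right (fint le_rfl le_rfl) (t := Set.Ioi 0)
    · exact measAt le_rfl
    · exact (fcont 0 Set.self_mem_Ici).mono (fun r hr => Set.mem_Ici.mpr (le_of_lt hr))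
  have dE : HasDerivWithinAt (fun h : ℝ => Complex.exp (lam * h)) lam (Set.Ici 0) 0 := by
    have := (cexp_deriv lam 0).hasDerivWithinAt (s := Set.Ici 0)
    simpa using this
  have dJ : HasDerivWithinAt
      (fun h : ℝ => By + (∫ σ in t..t+h, f σ) - ∫ σ in (0:ℝ)..h, f σ)
      (f t - f 0) (Set.Ici 0) 0 := (dA.const_add By).sub dB
  have dPhi := dE.smul dJ
  have hval : Complex.exp (lam * (0:ℝ)) • (f t - f 0)
      + lam • (By + (∫ σ in t..t+(0:ℝ), f σ) - ∫ σ in (0:ℝ)..(0:ℝ), f σ)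
      = (f t - f 0) + lam • By := by
    norm_num [intervalIntegral.integral_same]
  rw [hval] at dPhi
  have dT : HasDerivWithinAt (fun h : ℝ => T h By)
      ((f t - f 0) + lam • By) (Set.Ici 0) 0 := by
    refine dPhi.congr (fun h hh => ?_) ?_
    · exact step1 h hh
    · exact step1 0 le_rfl
  have hft : f t = T t y := by
    rw [hf]; show Complex.exp (lam * (t - t)) • T t y = T t y
    rw [sub_self, mul_zero, Complex.exp_zero, one_smul]
  have hf0 : f 0 = Complex.exp (lam * t) • y := by
    rw [hf]; show Complex.exp (lam * (t - 0)) • T 0 y = Complex.exp (lam * t) • y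
    rw [sub_zero, hT.1]; rfl
  rw [hft, hf0] at dT
  have hxmem : By ∈ L.domain := (hgen.1 By).mpr ⟨_, dT⟩
  have hLval : L ⟨By, hxmem⟩ = (T t y - Complex.exp (lam * t) • y) + lam • By :=
    rightDeriv_unique (hgen.2 ⟨By, hxmem⟩) dT
  exact ⟨hxmem, by rw [hLval]; exact add_sub_cancel_right _ _⟩

lemma shifted_apply (L : H →ₗ.[ℂ] H) (lam : ℂ) (v : L.domain) :
    shifted L lam v = L v - lam • (v : H) := rfl

lemma fund_id0 (hT : IsC0Semigroup T) (hgen : IsGenerator T L) (x : L.domain)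
    {t : ℝ} (ht : 0 ≤ t) :
    (x : H) = T t (x : H) - ∫ s in (0:ℝ)..t, T s (L x) := by
  have h := fund_id hT hgen x 0 ht
  simp only [zero_mul, neg_zero, Complex.exp_zero, one_smul, zero_smul, sub_zero] at h
  exact h.symm

lemma intable_T (hT : IsC0Semigroup T) (w : H) {a b : ℝ} (ha : 0 ≤ a) (hb : 0 ≤ b) :
    IntervalIntegrable (fun s : ℝ => T s w) volume a b := by
  apply ContinuousOn.intervalIntegrable
  apply (hT.2.2 w).mono
  intro u hu
  rw [Set.uIcc] at hu
  exact le_trans (le_inf ha hb) hu.1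

/-- Exponential decay of the semigroup yields a uniform lower bound for `L - λ`, `Re λ > μ`. -/
lemma decay_lower_bound (hT : IsC0Semigroup T) (hgen : IsGenerator T L)
    (M μ : ℝ) (hM : 1 ≤ M)
    (hdec : ∀ s : ℝ, 0 ≤ s → ∀ y : H, ‖T s y‖ ≤ M * Real.exp (μ * s) * ‖y‖)
    (lam : ℂ) (hlam : μ < lam.re) :
    ∃ C : ℝ, 0 < C ∧ ∀ v : L.domain, ‖(v : H)‖ ≤ C * ‖shifted L lam v‖ := by
  set r : ℝ := lam.re with hr
  have hM0 : (0:ℝ) < M := lt_of_lt_of_le one_pos hM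
  have h2M : (0:ℝ) < 2 * M := by linarith
  set t₀ : ℝ := max 1 (Real.log (2*M) / (r - μ)) with ht₀def
  have ht₀1 : (1:ℝ) ≤ t₀ := le_max_left _ _
  have ht₀ : (0:ℝ) ≤ t₀ := by linarith
  have hEE : ∀ s : ℝ, Real.exp (-(r*s)) * Real.exp (μ*s) = Real.exp ((μ - r)*s) := by
    intro s; rw [← Real.exp_add]; ring_nf
  have key1 : M * Real.exp ((μ - r) * t₀) ≤ 1/2 := by
    have h1 : Real.log (2*M) ≤ t₀ * (r - μ) :=
      (div_le_iff₀ (by linarith)).mp (le_max_right _ _)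
    have h2 : Real.exp ((μ - r) * t₀) ≤ (2*M)⁻¹ := by
      have h3 : (μ - r) * t₀ ≤ -Real.log (2*M) := by nlinarith
      have h4 := Real.exp_le_exp.mpr h3
      rwa [Real.exp_neg, Real.exp_log h2M] at h4
    have h4 : M * Real.exp ((μ - r) * t₀) ≤ M * (2*M)⁻¹ :=
      mul_le_mul_of_nonneg_left h2 hM0.le
    have h5 : M * (2*M)⁻¹ = 1/2 := by field_simp
    linarith
  refine ⟨2 * M * t₀, by positivity, fun v => ?_⟩
  have habs : ∀ s : ℝ, ‖Complex.exp (-(lam * s))‖ = Real.exp (-(r * s)) := by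
    intro s
    rw [Complex.norm_exp]
    congr 1
    simp [Complex.mul_re, hr]
  set w : H := L v - lam • (v : H) with hw
  have hid := fund_id hT hgen v lam ht₀
  rw [← hw] at hid
  have hbound1 : ‖Complex.exp (-(lam * t₀)) • T t₀ (v : H)‖ ≤ (1/2) * ‖(v:H)‖ := by
    have h6 : ‖T t₀ (v : H)‖ ≤ M * Real.exp (μ * t₀) * ‖(v:H)‖ := hdec t₀ ht₀ _
    calc ‖Complex.exp (-(lam * t₀)) • T t₀ (v : H)‖
        = Real.exp (-(r*t₀)) * ‖T t₀ (v : H)‖ := by rw [norm_smul, habs]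
      _ ≤ Real.exp (-(r*t₀)) * (M * Real.exp (μ * t₀) * ‖(v:H)‖) :=
          mul_le_mul_of_nonneg_left h6 (Real.exp_pos _).le
      _ = M * Real.exp ((μ - r) * t₀) * ‖(v:H)‖ := by rw [← hEE t₀]; ring
      _ ≤ (1/2) * ‖(v:H)‖ := by nlinarith [norm_nonneg (v : H)]
  have hbound2 : ‖∫ s in (0:ℝ)..t₀, Complex.exp (-(lam * s)) • T s w‖ ≤ M * ‖w‖ * t₀ := by
    have hb := intervalIntegral.norm_integral_le_of_norm_le_const (C := M * ‖w‖)
      (f := fun s : ℝ => Complex.exp (-(lam * s)) • T s w) (a := 0) (b := t₀) ?_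
    · rw [sub_zero, abs_of_nonneg ht₀] at hb; linarith
    · intro s hs
      have hs0 : 0 < s := by rw [Set.uIoc_of_le ht₀] at hs; exact hs.1
      have h8 := hdec s hs0.le w
      have h10 : Real.exp ((μ - r)*s) ≤ 1 := Real.exp_le_one_iff.mpr (by nlinarith)
      calc ‖Complex.exp (-(lam * s)) • T s w‖
          = Real.exp (-(r*s)) * ‖T s w‖ := by rw [norm_smul, habs]
        _ ≤ Real.exp (-(r*s)) * (M * Real.exp (μ * s) * ‖w‖) :=
            mul_le_mul_of_nonneg_left h8 (Real.exp_pos _).le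
        _ = M * Real.exp ((μ - r) * s) * ‖w‖ := by rw [← hEE s]; ring
        _ ≤ M * ‖w‖ := by
            have h11 := mul_le_mul_of_nonneg_right
              (mul_le_mul_of_nonneg_left h10 hM0.le) (norm_nonneg w)
            simpa using h11
  have hsum : ‖(v:H)‖ ≤ ‖Complex.exp (-(lam * t₀)) • T t₀ (v : H)‖
      + ‖∫ s in (0:ℝ)..t₀, Complex.exp (-(lam * s)) • T s w‖ := by
    conv_lhs => rw [← hid]
    exact norm_sub_le _ _
  have hws : shifted L lam v = w := rfl
  rw [hws]
  nlinarith [norm_nonneg w, norm_nonneg (v:H)]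

lemma resolvent_semiFredholm {lam : ℂ} (h : lam ∈ resolventSet L) : SemiFredholmAt L lam := by
  obtain ⟨R, h1, h2, h3⟩ := h
  constructor
  · have hr : LinearMap.range (shifted L lam) = ⊤ := by
      rw [LinearMap.range_eq_top]
      intro y
      exact ⟨⟨R y, h1 y⟩, h2 y (h1 y)⟩
    rw [hr, Submodule.top_coe]
    exact isClosed_univ
  · left
    haveI : Subsingleton ↥(LinearMap.ker (shifted L lam)) := by
      constructor
      rintro ⟨a, ha⟩ ⟨b, hb⟩
      have hz : ∀ u : L.domain, shifted L lam u = 0 → u = 0 := by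
        intro u hu
        have h4 := h3 u
        have h5 : L u - lam • (u : H) = 0 := hu
        rw [h5, map_zero] at h4
        exact Subtype.coe_injective h4.symm
      rw [LinearMap.mem_ker] at ha hb
      simp [hz a ha, hz b hb]
    exact findim_of_subsingleton _

/-- Transfer of Fredholmness of `T t - e^{λ t}` to semi-Fredholmness of `L - λ`. -/
lemma fredholm_transfer (hT : IsC0Semigroup T) (hgen : IsGenerator T L)
    {t : ℝ} (ht : 0 < t) (lam : ℂ)
    (hcl : IsClosed ((LinearMap.range ((T t - Complex.exp (lam*t) • (1 : H →L[ℂ] H)) : H →ₗ[ℂ] H) :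
      Submodule ℂ H) : Set H))
    (hker : FiniteDimensional ℂ (LinearMap.ker ((T t - Complex.exp (lam*t) • (1 : H →L[ℂ] H)) : H →ₗ[ℂ] H)))
    (hcoker : FiniteDimensional ℂ
      (H ⧸ LinearMap.range ((T t - Complex.exp (lam*t) • (1 : H →L[ℂ] H)) : H →ₗ[ℂ] H))) :
    SemiFredholmAt L lam := by
  set S : H →L[ℂ] H := T t - Complex.exp (lam*t) • (1 : H →L[ℂ] H) with hS
  have hSapp : ∀ u : H, S u = T t u - Complex.exp (lam*t) • u := by
    intro u; simp [hS]
  constructor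
  · apply isClosed_of_le_finiteCodim (LinearMap.range (S : H →ₗ[ℂ] H)) _ ?_ hcl hcoker
    intro u hu
    obtain ⟨y, rfl⟩ := LinearMap.mem_range.mp hu
    rw [LinearMap.mem_range]
    obtain ⟨hx, hid⟩ := B_lemma hT hgen ht.le lam y
    exact ⟨⟨_, hx⟩, by rw [shifted_apply]; rw [hid, ContinuousLinearMap.coe_coe, hSapp]⟩
  · left
    have hkermap : ∀ v : L.domain, shifted L lam v = 0 → S (v : H) = 0 := by
      intro v hv
      have hw0 : L v - lam • (v : H) = 0 := hv
      have hid := fund_id hT hgen v lam ht.le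
      rw [hw0] at hid
      simp only [map_zero, smul_zero, intervalIntegral.integral_zero, sub_zero] at hid
      have h2 : T t (v : H) = Complex.exp (lam * t) • (v : H) := by
        conv_rhs => rw [← hid]
        rw [smul_smul, ← Complex.exp_add]
        simp
      rw [hSapp, h2, sub_self]
    let φ : ↥(LinearMap.ker (shifted L lam)) →ₗ[ℂ] ↥(LinearMap.ker (S : H →ₗ[ℂ] H)) :=
      LinearMap.codRestrict _
        ((L.domain.subtype).comp (LinearMap.ker (shifted L lam)).subtype)
        (fun c => LinearMap.mem_ker.mpr (hkermap c.1 (LinearMap.mem_ker.mp c.2)))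
    have hinj : Function.Injective φ := by
      intro a b hab
      have h5 := congrArg (Subtype.val) hab
      exact Subtype.ext (Subtype.ext h5)
    haveI := hker
    exact FiniteDimensional.of_injective φ hinj

/-- If the semigroup decays exponentially at rate `μ < 0`, then `L - λ` is semi-Fredholm for
every `λ` with `Re λ > μ`. -/
lemma decay_semiFredholm (hT : IsC0Semigroup T) (hgen : IsGenerator T L)
    (M μ : ℝ) (hM : 1 ≤ M) (hμ : μ < 0)
    (hdec : ∀ s : ℝ, 0 ≤ s → ∀ y : H, ‖T s y‖ ≤ M * Real.exp (μ * s) * ‖y‖)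
    (lam : ℂ) (hlam : μ < lam.re) : SemiFredholmAt L lam := by
  obtain ⟨C, hC0, hlow⟩ := decay_lower_bound hT hgen M μ hM hdec lam hlam
  constructor
  · -- closed range
    apply isClosed_of_closure_subset
    intro y hy
    obtain ⟨yseq, hymem, hylim⟩ := mem_closure_iff_seq_limit.mp hy
    have hymem' : ∀ n, ∃ v : L.domain, shifted L lam v = yseq n :=
      fun n => LinearMap.mem_range.mp (SetLike.mem_coe.mp (hymem n))
    choose xseq hxseq using hymem'
    have hyc : CauchySeq yseq := hylim.cauchySeq
    have hxc : CauchySeq (fun n => (xseq n : H)) := by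
      rw [Metric.cauchySeq_iff] at hyc ⊢
      intro ε hε
      obtain ⟨N, hN⟩ := hyc (ε/(C+1)) (by positivity)
      refine ⟨N, fun m hm n hn => ?_⟩
      have h2 := hlow (xseq m - xseq n)
      rw [map_sub, hxseq m, hxseq n] at h2
      have hcoe : ((xseq m - xseq n : L.domain) : H) = (xseq m : H) - (xseq n : H) := rfl
      rw [hcoe] at h2
      have h1 : dist ((xseq m : H)) ((xseq n : H)) ≤ C * dist (yseq m) (yseq n) := by
        rw [dist_eq_norm, dist_eq_norm]
        exact h2
      have h3 := hN m hm n hn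
      have h4 : C * dist (yseq m) (yseq n) < C * (ε/(C+1)) + ε/(C+1) := by
        nlinarith [dist_nonneg (x := yseq m) (y := yseq n)]
      have h5 : C * (ε/(C+1)) + ε/(C+1) = ε := by field_simp
      linarith
    obtain ⟨x, hx⟩ := cauchySeq_tendsto_of_complete hxc
    set z : H := y + lam • x with hz
    have hLeq : ∀ n, L (xseq n) = yseq n + lam • (xseq n : H) := by
      intro n
      have h6 := hxseq n
      rw [shifted_apply, sub_eq_iff_eq_add] at h6
      exact h6
    have hLlim : Filter.Tendsto (fun n => L (xseq n)) Filter.atTop (nhds z) := by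
      have h7 : Filter.Tendsto (fun n => yseq n + lam • (xseq n : H)) Filter.atTop (nhds z) :=
        hylim.add (hx.const_smul lam)
      exact h7.congr (fun n => (hLeq n).symm)
    have hid : ∀ t : ℝ, 0 ≤ t → T t x = x + ∫ s in (0:ℝ)..t, T s z := by
      intro t ht
      have hlim1 : Filter.Tendsto (fun n => T t (xseq n : H)) Filter.atTop (nhds (T t x)) :=
        ((T t).continuous.tendsto x).comp hx
      have hlim2 : Filter.Tendsto (fun n => ∫ s in (0:ℝ)..t, T s (L (xseq n)))
          Filter.atTop (nhds (∫ s in (0:ℝ)..t, T s z)) := by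
        rw [tendsto_iff_norm_sub_tendsto_zero]
        apply squeeze_zero (g := fun n => M * ‖L (xseq n) - z‖ * t) (fun n => norm_nonneg _)
        · intro n
          have hint1 : IntervalIntegrable (fun s : ℝ => T s (L (xseq n))) volume 0 t :=
            intable_T hT _ le_rfl ht
          have hint2 : IntervalIntegrable (fun s : ℝ => T s z) volume 0 t :=
            intable_T hT _ le_rfl ht
          rw [← intervalIntegral.integral_sub hint1 hint2]
          have h8 : ∀ s : ℝ, T s (L (xseq n)) - T s z = T s (L (xseq n) - z) :=
            fun s => ((T s).map_sub _ _).symm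
          simp_rw [h8]
          have h9 := intervalIntegral.norm_integral_le_of_norm_le_const
            (C := M * ‖L (xseq n) - z‖) (f := fun s : ℝ => T s (L (xseq n) - z))
            (a := 0) (b := t) ?_
          · rw [sub_zero, abs_of_nonneg ht] at h9
            exact h9
          · intro s hs
            have hs0 : 0 < s := by rw [Set.uIoc_of_le ht] at hs; exact hs.1
            have h10 := hdec s hs0.le (L (xseq n) - z)
            have h11 : Real.exp (μ * s) ≤ 1 :=
              Real.exp_le_one_iff.mpr (by nlinarith)
            have h12 := mul_le_mul_of_nonneg_right
              (mul_le_mul_of_nonneg_left h11 (by linarith : (0:ℝ) ≤ M))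
              (norm_nonneg (L (xseq n) - z))
            calc ‖T s (L (xseq n) - z)‖ ≤ M * Real.exp (μ*s) * ‖L (xseq n) - z‖ := h10
              _ ≤ M * ‖L (xseq n) - z‖ := by simpa using h12
        · have h13 := tendsto_iff_norm_sub_tendsto_zero.mp hLlim
          have h14 := (h13.const_mul M).mul_const t
          simpa using h14
      have h15 : Filter.Tendsto (fun n => (xseq n : H)) Filter.atTop
          (nhds (T t x - ∫ s in (0:ℝ)..t, T s z)) := by
        have h16 := hlim1.sub hlim2
        exact h16.congr (fun n => (fund_id0 hT hgen (xseq n) ht).symm)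
      have h17 := tendsto_nhds_unique hx h15
      exact eq_add_of_sub_eq h17.symm
    have hFTC : HasDerivWithinAt (fun u : ℝ => ∫ s in (0:ℝ)..u, T s z) (T 0 z)
        (Set.Ici 0) 0 := by
      apply intervalIntegral.integral_hasDerivWithinAt_right (intable_T hT z le_rfl le_rfl)
        (t := Set.Ioi 0)
      · exact ⟨Set.Ici 0, Filter.mem_of_superset self_mem_nhdsWithin (fun r hr => Set.mem_Ici.mpr (le_of_lt hr)),
          ((hT.2.2 z).aestronglyMeasurable measurableSet_Ici)⟩
      · exact ((hT.2.2 z) 0 Set.self_mem_Ici).mono (fun r hr => Set.mem_Ici.mpr (le_of_lt hr))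
    have hT0z : T 0 z = z := by rw [hT.1]; rfl
    rw [hT0z] at hFTC
    have hder : HasDerivWithinAt (fun u : ℝ => T u x) z (Set.Ici 0) 0 := by
      refine (hFTC.const_add x).congr (fun u hu => ?_) ?_
      · exact hid u hu
      · exact hid 0 le_rfl
    have hxdom : x ∈ L.domain := (hgen.1 x).mpr ⟨z, hder⟩
    have hLx : L ⟨x, hxdom⟩ = z := rightDeriv_unique (hgen.2 ⟨x, hxdom⟩) hder
    rw [SetLike.mem_coe, LinearMap.mem_range]
    refine ⟨⟨x, hxdom⟩, ?_⟩
    rw [shifted_apply, hLx, hz]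
    exact add_sub_cancel_right y (lam • x)
  · left
    haveI : Subsingleton ↥(LinearMap.ker (shifted L lam)) := by
      constructor
      rintro ⟨a, ha⟩ ⟨b, hb⟩
      rw [LinearMap.mem_ker] at ha hb
      have hz0 : ∀ u : L.domain, shifted L lam u = 0 → u = 0 := by
        intro u hu
        have h18 := hlow u
        rw [hu, norm_zero, mul_zero] at h18
        exact Subtype.coe_injective (norm_le_zero_iff.mp h18)
      simp [hz0 a ha, hz0 b hb]
    exact findim_of_subsingleton _

lemma Tpow (hT : IsC0Semigroup T) {t : ℝ} (ht : 0 ≤ t) :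
    ∀ n : ℕ, T t ^ n = T ((n : ℝ) * t) := by
  intro n
  induction n with
  | zero => simp [hT.1]
  | succ n ih =>
    have h1 : ((n+1 : ℕ) : ℝ) * t = (n : ℝ) * t + t := by push_cast; ring
    have h2 : (0:ℝ) ≤ (n : ℝ) * t := by positivity
    rw [pow_succ, ih, h1, hT.2.1 ((n:ℝ)*t) t h2 ht]
    rfl

lemma spec_abs_le_one [Nontrivial H] (hT : IsC0Semigroup T) {c : ℝ} (hc : 0 < c)
    (hbddc : ∀ s : ℝ, 0 < s → ∀ y : H, ‖T s y‖ ≤ c * ‖y‖) {t : ℝ} (ht : 0 < t)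
    {lam : ℂ} (hlam : lam ∈ spectrum ℂ (T t)) : ‖lam‖ ≤ 1 := by
  by_contra hgt
  push_neg at hgt
  have hnorm : ∀ n : ℕ, 1 ≤ n → ‖T t ^ n‖ ≤ c := by
    intro n hn
    rw [Tpow hT ht.le n]
    apply ContinuousLinearMap.opNorm_le_bound _ hc.le
    intro y
    have hn0 : (0:ℝ) < (n : ℝ) := by exact_mod_cast hn
    exact hbddc ((n:ℝ)*t) (by positivity) y
  have hpow : ∀ n : ℕ, lam ^ n ∈ spectrum ℂ ((T t) ^ n) := by
    intro n
    by_contra hun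
    rw [spectrum.notMem_iff] at hun
    set x : H →L[ℂ] H := algebraMap ℂ (H →L[ℂ] H) lam with hx
    have hcomm : Commute x (T t) := Algebra.commutes lam (T t)
    have hgs1 := hcomm.geom_sum₂_mul n
    have hgs2 := hcomm.mul_geom_sum₂ n
    obtain ⟨u, hu⟩ := hun
    set sgeo : H →L[ℂ] H := ∑ i ∈ Finset.range n, x ^ i * (T t) ^ (n - 1 - i) with hsgeo
    have hun' : (↑u : H →L[ℂ] H) = x ^ n - (T t) ^ n := by rw [hu, map_pow]
    have hleft : (↑u⁻¹ * sgeo) * (x - T t) = 1 := by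
      rw [mul_assoc, hgs1, ← hun']
      exact u.inv_mul
    have hright : (x - T t) * (sgeo * ↑u⁻¹) = 1 := by
      rw [← mul_assoc, hgs2, ← hun']
      exact u.mul_inv
    have heq : ((↑u⁻¹ : H →L[ℂ] H) * sgeo) = (sgeo * ↑u⁻¹) := by
      calc (↑u⁻¹ : H →L[ℂ] H) * sgeo
          = (↑u⁻¹ * sgeo) * ((x - T t) * (sgeo * ↑u⁻¹)) := by rw [hright, mul_one]
        _ = ((↑u⁻¹ * sgeo) * (x - T t)) * (sgeo * ↑u⁻¹) := by rw [← mul_assoc]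
        _ = sgeo * ↑u⁻¹ := by rw [hleft, one_mul]
    have hunit : IsUnit (x - T t) :=
      ⟨⟨x - T t, sgeo * ↑u⁻¹, hright, by rw [← heq]; exact hleft⟩, rfl⟩
    rw [spectrum.mem_iff] at hlam
    exact hlam hunit
  have habs : ∀ n : ℕ, 1 ≤ n → ‖lam‖ ^ n ≤ c := by
    intro n hn
    have h1 := spectrum.norm_le_norm_of_mem (hpow n)
    rw [norm_pow] at h1
    exact le_trans h1 (hnorm n hn)
  obtain ⟨n, hnn⟩ := pow_unbounded_of_one_lt c hgt
  rcases Nat.eq_zero_or_pos n with h0 | h1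
  · rw [h0, pow_zero] at hnn
    have := habs 1 le_rfl
    rw [pow_one] at this
    linarith
  · exact absurd (habs n h1) (not_le.mpr hnn)

lemma fredholmB_of_not_spectrum (A : H →L[ℂ] H) (lam : ℂ) (h : lam ∉ spectrum ℂ A) :
    IsClosed ((LinearMap.range ((A - lam • (1 : H →L[ℂ] H)) : H →ₗ[ℂ] H) : Submodule ℂ H) : Set H) ∧
    FiniteDimensional ℂ (LinearMap.ker ((A - lam • (1 : H →L[ℂ] H)) : H →ₗ[ℂ] H)) ∧
    FiniteDimensional ℂ (H ⧸ LinearMap.range ((A - lam • (1 : H →L[ℂ] H)) : H →ₗ[ℂ] H)) := by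
  rw [spectrum.notMem_iff] at h
  obtain ⟨u, hu⟩ := h
  have hS : A - lam • (1 : H →L[ℂ] H) = -(↑u : H →L[ℂ] H) := by
    rw [hu, Algebra.algebraMap_eq_smul_one, neg_sub]
  have happ : ∀ v : H, (A - lam • (1 : H →L[ℂ] H)) v = -((↑u : H →L[ℂ] H) v) := by
    intro v; rw [hS]; rfl
  have hsurj : LinearMap.range ((A - lam • (1 : H →L[ℂ] H)) : H →ₗ[ℂ] H) = ⊤ := by
    rw [LinearMap.range_eq_top]
    intro y
    refine ⟨-((↑u⁻¹ : H →L[ℂ] H) y), ?_⟩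
    show (A - lam • (1 : H →L[ℂ] H)) (-((↑u⁻¹ : H →L[ℂ] H) y)) = y
    rw [happ, map_neg, neg_neg, ← ContinuousLinearMap.mul_apply, u.mul_inv]
    rfl
  have hinj : LinearMap.ker ((A - lam • (1 : H →L[ℂ] H)) : H →ₗ[ℂ] H) = ⊥ := by
    rw [eq_bot_iff]
    intro v hv
    rw [LinearMap.mem_ker] at hv
    change (A - lam • (1 : H →L[ℂ] H)) v = 0 at hv
    rw [happ, neg_eq_zero] at hv
    have h2 : ((↑u⁻¹ : H →L[ℂ] H)) ((↑u : H →L[ℂ] H) v) = 0 := by rw [hv, map_zero]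
    rw [← ContinuousLinearMap.mul_apply, u.inv_mul] at h2
    simpa using h2
  refine ⟨?_, ?_, ?_⟩
  · rw [hsurj, Submodule.top_coe]; exact isClosed_univ
  · rw [hinj]; infer_instance
  · rw [hsurj]
    haveI : Subsingleton (H ⧸ (⊤ : Submodule ℂ H)) :=
      Submodule.Quotient.subsingleton_iff.mpr rfl
    exact findim_of_subsingleton _

end Helpers

/-- For the semigroup `e^{L⁰t}` generated by `L⁰ = νA + ωB⁰ + u∞B¹`:
the spectral bound of `L⁰`, the uniform growth bound of `e^{L⁰t}` and the essential growth
bound of `e^{L⁰t}` all vanish, `s(L⁰) = γ(e^{L⁰t}) = γ̃_ess(e^{L⁰t}) = 0`; in particular the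
essential spectral radius satisfies `r̃_ess(e^{L⁰t}) = 1` for every `t > 0`. -/
theorem L0_growth_bounds_vanish
    (ν ω uinf : ℝ) (hν : 0 < ν) (hω : ω ≠ 0)
    (L0 : H →ₗ.[ℂ] H)
    (T0 : ℝ → H →L[ℂ] H) (hT0 : IsC0Semigroup T0) (hgen0 : IsGenerator T0 L0)
    -- the uniform bound `‖e^{L⁰t}φ‖₂ ≤ c‖φ‖₂`
    (hbdd : ∃ c : ℝ, 0 < c ∧ ∀ t : ℝ, 0 < t → ∀ y : H, ‖T0 t y‖ ≤ c * ‖y‖)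
    -- `Sp(L⁰) ⊆ {Re λ ≤ 0}`, with `0` in the closure of the essential spectrum
    (hspec : pSpec L0 ⊆ {z : ℂ | z.re ≤ 0})
    (h0cl : (0 : ℂ) ∈ closure (essSpec L0)) :
    spectralBound L0 = 0 ∧ growthBound T0 = 0 ∧
    ∀ t : ℝ, 0 < t →
      essRadius (T0 t) = 1 ∧ Real.log (essRadius (T0 t)) / t = 0 := by
  classical
  obtain ⟨c, hc0, hbddc⟩ := hbdd
  -- essential spectrum is contained in the spectrum
  have hsub : essSpec L0 ⊆ pSpec L0 := by
    intro lam hlam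
    intro hres
    exact hlam (resolvent_semiFredholm hres)
  have hne : (essSpec L0).Nonempty := by
    by_contra hempty
    rw [Set.not_nonempty_iff_eq_empty] at hempty
    rw [hempty, closure_empty] at h0cl
    exact h0cl
  have hclose : ∀ ε : ℝ, 0 < ε → ∃ lam ∈ essSpec L0, ‖lam‖ < ε := by
    intro ε hε
    obtain ⟨lam, hlam, hdist⟩ := Metric.mem_closure_iff.mp h0cl ε hε
    refine ⟨lam, hlam, ?_⟩
    rwa [dist_zero_left] at hdist
  have hSB : spectralBound L0 = 0 := by
    rw [spectralBound]
    have hbddA : BddAbove (Complex.re '' pSpec L0) := by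
      refine ⟨0, ?_⟩
      rintro x ⟨lam, hlam, rfl⟩
      exact hspec hlam
    have hneA : (Complex.re '' pSpec L0).Nonempty := by
      obtain ⟨lam, hlam⟩ := hne
      exact ⟨lam.re, lam, hsub hlam, rfl⟩
    apply le_antisymm
    · apply csSup_le hneA
      rintro x ⟨lam, hlam, rfl⟩
      exact hspec hlam
    · by_contra hlt
      push_neg at hlt
      obtain ⟨lam, hlam, habs⟩ := hclose (-(sSup (Complex.re '' pSpec L0))) (by linarith)
      have h1 : lam.re ≤ sSup (Complex.re '' pSpec L0) :=
        le_csSup hbddA ⟨lam, hsub hlam, rfl⟩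
      have h2 := Complex.abs_re_le_norm lam
      have h3 := neg_abs_le lam.re
      linarith
  have hgb : growthBound T0 = 0 := by
    rw [growthBound]
    have h0mem : (0:ℝ) ∈ {μ : ℝ | ∃ M : ℝ, 0 < M ∧ ∀ t : ℝ, 0 < t → ∀ x : H,
        ‖T0 t x‖ ≤ M * Real.exp (μ * t) * ‖x‖} := by
      refine ⟨c, hc0, fun t ht y => ?_⟩
      rw [zero_mul, Real.exp_zero, mul_one]
      exact hbddc t ht y
    have hlb : ∀ μ' ∈ {μ : ℝ | ∃ M : ℝ, 0 < M ∧ ∀ t : ℝ, 0 < t → ∀ x : H,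
        ‖T0 t x‖ ≤ M * Real.exp (μ * t) * ‖x‖}, (0:ℝ) ≤ μ' := by
      rintro μ' ⟨M, hM0, hMb⟩
      by_contra hneg
      push_neg at hneg
      have hdec : ∀ s : ℝ, 0 ≤ s → ∀ y : H,
          ‖T0 s y‖ ≤ (max M 1) * Real.exp (μ' * s) * ‖y‖ := by
        intro s hs y
        rcases eq_or_lt_of_le hs with h | h
        · rw [← h, mul_zero, Real.exp_zero, mul_one, hT0.1]
          have h4 : (1:ℝ) ≤ max M 1 := le_max_right _ _
          have h5 : ‖(1 : H →L[ℂ] H) y‖ = ‖y‖ := by rw [ContinuousLinearMap.one_apply]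
          rw [h5]
          nlinarith [norm_nonneg y]
        · have h6 := hMb s h y
          have h7 : M ≤ max M 1 := le_max_left _ _
          have h12 := mul_le_mul_of_nonneg_right
            (mul_le_mul_of_nonneg_right h7 (Real.exp_pos (μ' * s)).le) (norm_nonneg y)
          linarith
      obtain ⟨lam, hlam, hablam⟩ := hclose (-μ') (by linarith)
      have hrel : μ' < lam.re := by
        have h8 := Complex.abs_re_le_norm lam
        have h9 := neg_abs_le lam.re
        linarith
      exact hlam (decay_semiFredholm hT0 hgen0 (max M 1) μ' (le_max_right _ _) hneg
        hdec lam hrel)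
    exact le_antisymm (csInf_le ⟨0, hlb⟩ h0mem) (le_csInf ⟨0, h0mem⟩ hlb)
  haveI : Nontrivial H := by
    by_contra hnt
    rw [not_nontrivial_iff_subsingleton] at hnt
    obtain ⟨lam, hlam⟩ := hne
    apply hlam
    constructor
    · exact (Set.toFinite _).isClosed
    · left
      exact findim_of_subsingleton _
  refine ⟨hSB, hgb, ?_⟩
  intro t ht
  have hupper : ∀ lam' ∈ essSpecB (T0 t), ‖lam'‖ ≤ 1 := by
    intro lam' hl
    by_contra hgt
    push_neg at hgt
    apply hl
    apply fredholmB_of_not_spectrum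
    intro hmem
    exact absurd (spec_abs_le_one hT0 hc0 hbddc ht hmem) (not_le.mpr hgt)
  have hlower : ∀ lam ∈ essSpec L0, Complex.exp (lam * t) ∈ essSpecB (T0 t) := by
    intro lam hlam hF
    exact hlam (fredholm_transfer hT0 hgen0 ht lam hF.1 hF.2.1 hF.2.2)
  have hbddB : BddAbove ((fun z : ℂ => ‖z‖) '' essSpecB (T0 t)) := by
    refine ⟨1, ?_⟩
    rintro x ⟨l, hl, rfl⟩
    exact hupper l hl
  have hrad_le : essRadius (T0 t) ≤ 1 := by
    rw [essRadius]
    apply Real.sSup_le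
    · rintro x ⟨l, hl, rfl⟩
      exact hupper l hl
    · norm_num
  have hrad_ge : ∀ ε : ℝ, 0 < ε → Real.exp (-(ε * t)) ≤ essRadius (T0 t) := by
    intro ε hε
    obtain ⟨lam, hlam, hablam⟩ := hclose ε hε
    have h1 : ‖Complex.exp (lam * t)‖ = Real.exp (lam.re * t) := by
      rw [Complex.norm_exp]
      congr 1
      simp [Complex.mul_re]
    have h8 := Complex.abs_re_le_norm lam
    have h9 := neg_abs_le lam.re
    have h2 : Real.exp (-(ε * t)) ≤ Real.exp (lam.re * t) := by
      apply Real.exp_le_exp.mpr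
      nlinarith
    calc Real.exp (-(ε * t)) ≤ Real.exp (lam.re * t) := h2
      _ = ‖Complex.exp (lam * t)‖ := h1.symm
      _ ≤ essRadius (T0 t) := le_csSup hbddB ⟨_, hlower lam hlam, rfl⟩
  have hrad : essRadius (T0 t) = 1 := by
    refine le_antisymm hrad_le ?_
    have hseq : Filter.Tendsto (fun n : ℕ => Real.exp (-((1/((n:ℝ)+1)) * t)))
        Filter.atTop (nhds 1) := by
      have h5 : Filter.Tendsto (fun n : ℕ => 1/((n:ℝ)+1)) Filter.atTop (nhds 0) :=
        tendsto_one_div_add_atTop_nhds_zero_nat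
      have h4 : Filter.Tendsto (fun n : ℕ => -((1/((n:ℝ)+1)) * t)) Filter.atTop (nhds 0) := by
        have := (h5.mul_const t).neg
        simpa using this
      have := (Real.continuous_exp.tendsto 0).comp h4
      simpa [Function.comp_def] using this
    apply le_of_tendsto hseq
    apply Filter.Eventually.of_forall
    intro n
    exact hrad_ge (1/((n:ℝ)+1)) (by positivity)
  exact ⟨hrad, by rw [hrad, Real.log_one, zero_div]⟩

end NSRot
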